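/- In each row of the unit k=3 Stern-Brocot tree (starting terms 0/1 and 1/1), the numerators of consecutive fractions alternate in parity: the fraction at even index has even numerator and the fraction at odd index has odd numerator, and all denominators are odd. -/

import Mathlib

/-- Reduce a fraction (numerator, denominator) to lowest terms. -/
def reduceFrac (x : ℤ × ℤ) : ℤ × ℤ :=
  (x.1 / Int.gcd x.1 x.2, x.2 / Int.gcd x.1 x.2)

/-- The reduced left weighted mediant (k = 3) of two fractions. -/
def leftMediant (x y : ℤ × ℤ) : ℤ × ℤ :=
  reduceFrac (2 * x.1 + y.1, 2 * x.2 + y.2)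

/-- The reduced right weighted mediant (k = 3) of two fractions. -/
def rightMediant (x y : ℤ × ℤ) : ℤ × ℤ :=
  reduceFrac (x.1 + 2 * y.1, x.2 + 2 * y.2)

/-- Insert the two reduced weighted mediants between every pair of consecutive fractions. -/
def insertMediants : List (ℤ × ℤ) → List (ℤ × ℤ)
  | [] => []
  | [x] => [x]
  | x :: y :: rest => x :: leftMediant x y :: rightMediant x y :: insertMediants (y :: rest)

/-- The rows of the k = 3 Stern-Brocot tree with starting terms `x` and `y`. -/
def sbRow (x y : ℤ × ℤ) : ℕ → List (ℤ × ℤ)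
  | 0 => [x, y]
  | n + 1 => insertMediants (sbRow x y n)

lemma odd_div_parity (a g c : ℤ) (hg : g % 2 = 1) (hc : a = g * c) : a % 2 = c % 2 := by
  have h1 : a % 2 = 0 ↔ c % 2 = 0 := by
    rw [← Int.even_iff, ← Int.even_iff, hc, Int.even_mul]
    constructor
    · rintro (h | h)
      · exfalso; rw [Int.even_iff] at h; omega
      · exact h
    · exact Or.inr
  omega

lemma reduce_parity (a b : ℤ) (hb : b % 2 = 1) :
    (reduceFrac (a, b)).1 % 2 = a % 2 ∧ (reduceFrac (a, b)).2 % 2 = 1 := by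
  simp only [reduceFrac]
  obtain ⟨g, hg⟩ : ∃ g : ℤ, (Int.gcd a b : ℤ) = g := ⟨_, rfl⟩
  rw [hg]
  have hga : g ∣ a := hg ▸ Int.gcd_dvd_left a b
  have hgb : g ∣ b := hg ▸ Int.gcd_dvd_right a b
  have hgodd : g % 2 = 1 := by
    by_contra hcon
    have : (2 : ℤ) ∣ g := by omega
    have : (2 : ℤ) ∣ b := this.trans hgb
    omega
  have hgne : g ≠ 0 := by omega
  obtain ⟨c, hc⟩ := hga
  obtain ⟨d, hd⟩ := hgb
  have h1 : a / g = c := by rw [hc]; exact Int.mul_ediv_cancel_left c hgne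
  have h2 : b / g = d := by rw [hd]; exact Int.mul_ediv_cancel_left d hgne
  rw [h1, h2]
  refine ⟨(odd_div_parity a g c hgodd hc).symm, ?_⟩
  have := odd_div_parity b g d hgodd hd
  omega

def AltP : Bool → List (ℤ × ℤ) → Prop
  | _, [] => True
  | b, p :: rest => p.1 % 2 = (if b then 1 else 0) ∧ p.2 % 2 = 1 ∧ AltP (!b) rest

lemma altp_insert : ∀ (l : List (ℤ × ℤ)) (b : Bool), AltP b l → AltP b (insertMediants l)
  | [], _, h => h
  | [x], _, h => h
  | x :: y :: rest, b, ⟨h1, h2, h3, h4, h5⟩ => by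
    have hL := reduce_parity (2 * x.1 + y.1) (2 * x.2 + y.2) (by omega)
    have hR := reduce_parity (x.1 + 2 * y.1) (x.2 + 2 * y.2) (by omega)
    have htail := altp_insert (y :: rest) (!b) ⟨h3, h4, h5⟩
    rw [insertMediants]
    simp only [AltP, Bool.not_not, leftMediant, rightMediant]
    refine ⟨h1, h2, ?_, hL.2, ?_, hR.2, htail⟩
    · rw [hL.1]
      cases b <;> · simp only [Bool.not_true, Bool.not_false, if_true, if_false,
        Bool.false_eq_true, Bool.true_eq_false, ite_true, ite_false] at h1 h3 ⊢; omega
    · rw [hR.1]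
      cases b <;> · simp only [Bool.false_eq_true, Bool.true_eq_false, ite_true,
        ite_false, if_true, if_false] at h1 ⊢; omega

lemma altp_get : ∀ (l : List (ℤ × ℤ)) (b : Bool) (i : ℕ) (h : i < l.length), AltP b l →
    (l.get ⟨i, h⟩).1 % 2 = (if Even i then (if b then (1:ℤ) else 0) else (if b then 0 else 1)) ∧
    (l.get ⟨i, h⟩).2 % 2 = 1
  | p :: rest, b, 0, h, ⟨h1, h2, h3⟩ => by simpa using ⟨h1, h2⟩
  | p :: rest, b, j + 1, h, ⟨h1, h2, h3⟩ => by
    have := altp_get rest (!b) j (by simpa using h) h3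
    simp only [List.get_cons_succ] at *
    rcases this with ⟨ha, hb2⟩
    refine ⟨?_, hb2⟩
    rw [ha]
    rcases Nat.even_or_odd j with he | ho <;> cases b <;>
      simp_all [Nat.even_add_one, Nat.not_even_iff_odd]

lemma altp_row (n : ℕ) : AltP false (sbRow (0, 1) (1, 1) n) := by
  induction n with
  | zero => exact ⟨by norm_num, by norm_num, by norm_num, by norm_num, trivial⟩
  | succ k ih => exact altp_insert _ false ih

/-- In each row of the unit k = 3 Stern-Brocot tree, numerators alternate in parity with
the index (even index ↔ even numerator) and all denominators are odd. -/
theorem unit_tree_alternating_numerators (n : ℕ) (i : ℕ)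
    (h : i < (sbRow (0, 1) (1, 1) n).length) :
    (Even i ↔ Even ((sbRow (0, 1) (1, 1) n).get ⟨i, h⟩).1) ∧
    Odd ((sbRow (0, 1) (1, 1) n).get ⟨i, h⟩).2 := by
  obtain ⟨h1, h2⟩ := altp_get _ false i h (altp_row n)
  refine ⟨?_, by rw [Int.odd_iff]; exact h2⟩
  rcases Nat.even_or_odd i with he | ho
  · simp [he] at h1
    simp [he, Int.even_iff, h1]
  · simp [Nat.not_even_iff_odd.mpr ho] at h1
    simp [Nat.not_even_iff_odd.mpr ho, Int.even_iff, h1]
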